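/- Let G be a stopping rotor graph and let ρ, ρ' be rotor configurations of G. Then ρ ∼ ρ' if and only if ρ' can be obtained from ρ by a finite sequence of positive and negative cycle pushes. -/

import Mathlib

/-- A (stopping) rotor graph: a finite directed multigraph together with a
rotor order `rotor : A → A` acting on each out-arc fiber `A⁺(u)` as a single
cycle, such that from every vertex there is a directed path to a sink. -/
structure RotorGraph where
  V : Type
  A : Type
  [instFintypeV : Fintype V]
  [instFintypeA : Fintype A]
  [instDecEqV : DecidableEq V]
  [instDecEqA : DecidableEq A]
  head : A → V
  tail : A → V
  rotor : A → A
  rotor_tail : ∀ a, tail (rotor a) = tail a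
  rotor_cycle : ∀ a b : A, tail a = tail b → ∃ k : ℕ, rotor^[k] a = b
  stopping : ∀ v : V, ∃ (m : ℕ) (p : ℕ → V), p 0 = v ∧ (¬∃ a, tail a = p m) ∧
    ∀ i < m, ∃ a, tail a = p i ∧ head a = p (i + 1)

attribute [instance] RotorGraph.instFintypeV RotorGraph.instFintypeA
  RotorGraph.instDecEqV RotorGraph.instDecEqA

namespace RotorGraph

variable (G : RotorGraph)

/-- The set `V₀` of non-sink vertices (positive outdegree). -/
def V0 : Set G.V := {v | ∃ a, G.tail a = v}

/-- A rotor configuration: a choice `ρ(u) ∈ A⁺(u)` for every `u ∈ V₀`. -/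
def RotorConfig := {ρ : ↥G.V0 → G.A // ∀ v : ↥G.V0, G.tail (ρ v) = v.val}

/-- The routing step `routing⁺_u`: move a particle from `u` along `ρ(u)` and
turn the rotor at `u`. -/
def RoutingStep (p q : G.RotorConfig × (G.V → ℤ)) : Prop :=
  ∃ u : ↥G.V0,
    (∀ w : ↥G.V0, q.1.val w = if w = u then G.rotor (p.1.val u) else p.1.val w) ∧
    (∀ v : G.V, q.2 v =
      p.2 v - (if v = u.val then 1 else 0) + (if v = G.head (p.1.val u) then 1 else 0))

/-- Equivalence of rotor-particle configurations: a finite sequence of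
operators `routing⁺_u` and `routing⁻_u`. -/
def RPEquiv : (G.RotorConfig × (G.V → ℤ)) → (G.RotorConfig × (G.V → ℤ)) → Prop :=
  Relation.ReflTransGen (fun p q => G.RoutingStep p q ∨ G.RoutingStep q p)

/-- Equivalence of rotor configurations: `ρ ∼ ρ'` iff `(ρ,σ) ∼ (ρ',σ)` for some
(equivalently, every) particle configuration `σ`. -/
def RotorEquiv (ρ ρ' : G.RotorConfig) : Prop :=
  ∃ σ : G.V → ℤ, G.RPEquiv (ρ, σ) (ρ', σ)

/-- `C` is (the vertex set of) a directed circuit of the functional graph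
`G(ρ)`. -/
def IsCircuit (ρ : G.RotorConfig) (C : Set ↥G.V0) : Prop :=
  ∃ m : ℕ, 0 < m ∧ ∃ f : ZMod m → ↥G.V0, Function.Injective f ∧ Set.range f = C ∧
    ∀ i : ZMod m, G.head (ρ.val (f i)) = (f (i + 1)).val

/-- Positive cycle push: turn the rotor at every vertex of a directed circuit
of `G(ρ)`.  (A negative cycle push from `ρ` to `ρ'` is exactly a positive cycle
push from `ρ'` to `ρ`.) -/
def PosCyclePush (ρ ρ' : G.RotorConfig) : Prop :=
  ∃ C : Set ↥G.V0, G.IsCircuit ρ C ∧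
    (∀ u ∈ C, ρ'.val u = G.rotor (ρ.val u)) ∧ (∀ u ∉ C, ρ'.val u = ρ.val u)

/-- A finite sequence of positive and negative cycle pushes. -/
def CyclePushSeq : G.RotorConfig → G.RotorConfig → Prop :=
  Relation.ReflTransGen (fun a b => G.PosCyclePush a b ∨ G.PosCyclePush b a)

/-- `routing^∞(ρ,σ)`: all rotor-particle configurations equivalent to `(ρ,σ)`
with no particles left on `V₀`. -/
def RoutingInfty (p : G.RotorConfig × (G.V → ℤ)) : Set (G.RotorConfig × (G.V → ℤ)) :=
  {q | G.RPEquiv p q ∧ ∀ u : ↥G.V0, q.2 u.val = 0}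

end RotorGraph

namespace RotorGraph

variable (G : RotorGraph)

noncomputable instance fintypeV0 : Fintype ↥G.V0 := Fintype.ofFinite _

lemma rotor_bijective : Function.Bijective G.rotor := by
  rw [Fintype.bijective_iff_surjective_and_card]
  refine ⟨fun a => ?_, rfl⟩
  obtain ⟨k, hk⟩ := G.rotor_cycle (G.rotor a) a (G.rotor_tail a)
  refine ⟨G.rotor^[k] a, ?_⟩
  have h := (Function.iterate_succ_apply G.rotor k a).symm.trans
    (Function.iterate_succ_apply' G.rotor k a)
  rw [← h, hk]

/-- The rotor order as a permutation of arcs. -/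
noncomputable def e : Equiv.Perm G.A := Equiv.ofBijective G.rotor G.rotor_bijective

@[simp] lemma e_apply (a : G.A) : G.e a = G.rotor a := rfl

@[simp] lemma tail_e (a : G.A) : G.tail (G.e a) = G.tail a := G.rotor_tail a

@[simp] lemma tail_e_symm (a : G.A) : G.tail (G.e.symm a) = G.tail a := by
  conv_rhs => rw [← G.e.apply_symm_apply a]
  rw [e_apply, G.rotor_tail]

lemma zpow_succ_apply (m : ℤ) (a : G.A) :
    (G.e ^ (m + 1)) a = G.e ((G.e ^ m) a) := by
  rw [add_comm, zpow_add, zpow_one, Equiv.Perm.mul_apply]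

lemma zpow_pred_apply (m : ℤ) (a : G.A) :
    (G.e ^ (m - 1)) a = G.e.symm ((G.e ^ m) a) := by
  rw [sub_eq_add_neg, add_comm, zpow_add, zpow_neg_one, Equiv.Perm.mul_apply]
  rfl

lemma tail_zpow (m : ℤ) (a : G.A) : G.tail ((G.e ^ m) a) = G.tail a := by
  induction m using Int.induction_on with
  | zero => simp
  | succ k ih => rw [zpow_succ_apply, tail_e, ih]
  | pred k ih => rw [show (-(k:ℤ) - 1) = (-(k:ℤ)) - 1 from rfl, zpow_pred_apply, tail_e_symm, ih]

end RotorGraph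
namespace RotorGraph

variable (G : RotorGraph)

/-- Indicator particle configuration. -/
def dd (x : G.V) : G.V → ℤ := fun v => if v = x then 1 else 0

/-- Net particle displacement of a single rotation at position `k` of arc `a`. -/
noncomputable def wA (a : G.A) (k : ℤ) : G.V → ℤ :=
  G.dd (G.head ((G.e ^ k) a)) - G.dd (G.tail a)

/-- Net particle displacement after net rotation `m` of arc `a`. -/
noncomputable def phiA (a : G.A) (m : ℤ) : G.V → ℤ :=
  (∑ k ∈ Finset.Ico (0 : ℤ) m, G.wA a k) - ∑ k ∈ Finset.Ico m (0 : ℤ), G.wA a k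

@[simp] lemma phiA_zero (a : G.A) : G.phiA a 0 = 0 := by
  simp [phiA]

lemma phiA_succ (a : G.A) (m : ℤ) : G.phiA a (m + 1) = G.phiA a m + G.wA a m := by
  unfold phiA
  rcases le_or_gt 0 m with h | h
  · rw [Finset.Ico_eq_empty (show ¬ m < (0:ℤ) by omega),
      Finset.Ico_eq_empty (show ¬ m + 1 < (0:ℤ) by omega),
      show Finset.Ico (0:ℤ) (m+1) = insert m (Finset.Ico (0:ℤ) m) from by
        ext x; simp only [Finset.mem_Ico, Finset.mem_insert]; omega,
      Finset.sum_insert (by simp only [Finset.mem_Ico]; omega), Finset.sum_empty]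
    abel
  · rw [Finset.Ico_eq_empty (show ¬ (0:ℤ) < m + 1 by omega),
      Finset.Ico_eq_empty (show ¬ (0:ℤ) < m by omega),
      show Finset.Ico m (0:ℤ) = insert m (Finset.Ico (m+1) (0:ℤ)) from by
        ext x; simp only [Finset.mem_Ico, Finset.mem_insert]; omega,
      Finset.sum_insert (by simp only [Finset.mem_Ico]; omega), Finset.sum_empty]
    abel

lemma phiA_pred (a : G.A) (m : ℤ) : G.phiA a (m - 1) = G.phiA a m - G.wA a (m - 1) := by
  have h := G.phiA_succ a (m - 1)
  rw [sub_add_cancel] at h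
  rw [h]; abel

lemma phiA_one (a : G.A) : G.phiA a 1 = G.dd (G.head a) - G.dd (G.tail a) := by
  have h := G.phiA_succ a 0
  rw [zero_add, phiA_zero, zero_add] at h
  rw [h]; simp [wA]

lemma wA_rot (a : G.A) (k : ℤ) : G.wA (G.e a) k = G.wA a (k + 1) := by
  unfold wA
  rw [show (G.e ^ k) (G.e a) = (G.e ^ (k+1)) a from by rw [zpow_add, zpow_one]; rfl, tail_e]

lemma phiA_rot (a : G.A) (m : ℤ) : G.phiA (G.e a) m = G.phiA a (m + 1) - G.phiA a 1 := by
  induction m using Int.induction_on with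
  | zero => simp
  | succ k ih =>
    rw [phiA_succ, ih, wA_rot, G.phiA_succ a ((k:ℤ)+1)]
    abel
  | pred k ih =>
    have key := G.phiA_pred (G.e a) (-(k:ℤ))
    rw [key, ih, wA_rot]
    rw [show (-(k:ℤ) - 1 + 1) = -(k:ℤ) from by ring]
    rw [G.phiA_succ a (-(k:ℤ))]
    abel

lemma phiA_rot_symm (a : G.A) (m : ℤ) :
    G.phiA (G.e.symm a) m = G.phiA a (m - 1) + G.phiA (G.e.symm a) 1 := by
  have h := G.phiA_rot (G.e.symm a) (m - 1)
  rw [G.e.apply_symm_apply, sub_add_cancel] at h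
  rw [h]; abel

lemma phiA_one_symm (a : G.A) :
    G.phiA (G.e.symm a) 1 = G.dd (G.head (G.e.symm a)) - G.dd (G.tail a) := by
  rw [phiA_one, tail_e_symm]

end RotorGraph
namespace RotorGraph

variable (G : RotorGraph)

lemma zpow_succ_apply' (m : ℤ) (a : G.A) :
    (G.e ^ (m + 1)) a = (G.e ^ m) (G.e a) := by
  rw [zpow_add, zpow_one]; rfl

lemma zpow_pred_apply' (m : ℤ) (a : G.A) :
    (G.e ^ (m - 1)) a = (G.e ^ m) (G.e.symm a) := by
  rw [sub_eq_add_neg, zpow_add, zpow_neg_one]; rfl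

lemma zpow_neg_one_apply (a : G.A) : (G.e ^ (-1 : ℤ)) a = G.e.symm a := by
  rw [zpow_neg_one]; rfl

lemma wA_zero (a : G.A) : G.wA a 0 = G.dd (G.head a) - G.dd (G.tail a) := by
  unfold wA; rw [zpow_zero]; rfl

lemma wA_neg_one (a : G.A) :
    G.wA a (-1) = G.dd (G.head (G.e.symm a)) - G.dd (G.tail a) := by
  unfold wA; rw [zpow_neg_one_apply]

lemma phiA_one_eq_wA_zero (a : G.A) : G.phiA a 1 = G.wA a 0 := by
  rw [phiA_one, wA_zero]

lemma phiA_symm_one_eq_wA_neg_one (a : G.A) : G.phiA (G.e.symm a) 1 = G.wA a (-1) := by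
  rw [phiA_one, tail_e_symm, wA_neg_one]

/-- Total particle displacement of net rotation vector `n` applied to `ρ`. -/
noncomputable def Phi (ρ : G.RotorConfig) (n : ↥G.V0 → ℤ) : G.V → ℤ :=
  ∑ u, G.phiA (ρ.val u) (n u)

lemma Phi_eq_add (ρ : G.RotorConfig) (n : ↥G.V0 → ℤ) (u : ↥G.V0) :
    G.Phi ρ n = G.phiA (ρ.val u) (n u) + ∑ w ∈ Finset.univ.erase u, G.phiA (ρ.val w) (n w) :=
  (Finset.add_sum_erase _ _ (Finset.mem_univ u)).symm

/-- Rotate the rotor configuration at a single vertex. -/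
noncomputable def rotAt (ρ : G.RotorConfig) (u : ↥G.V0) : G.RotorConfig :=
  ⟨fun w => if w = u then G.e (ρ.val u) else ρ.val w, by
    intro w; dsimp only; split_ifs with h
    · subst h; rw [tail_e]; exact ρ.prop w
    · exact ρ.prop w⟩

/-- Rotate the rotor configuration backwards at a single vertex. -/
noncomputable def invRotAt (ρ : G.RotorConfig) (u : ↥G.V0) : G.RotorConfig :=
  ⟨fun w => if w = u then G.e.symm (ρ.val u) else ρ.val w, by
    intro w; dsimp only; split_ifs with h
    · subst h; rw [tail_e_symm]; exact ρ.prop w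
    · exact ρ.prop w⟩

lemma Phi_rotAt (ρ : G.RotorConfig) (n : ↥G.V0 → ℤ) (u : ↥G.V0) :
    G.Phi (G.rotAt ρ u) (Function.update n u (n u - 1)) = G.Phi ρ n - G.wA (ρ.val u) 0 := by
  rw [G.Phi_eq_add _ _ u, G.Phi_eq_add ρ n u]
  have h1 : ∑ w ∈ Finset.univ.erase u,
      G.phiA ((G.rotAt ρ u).val w) (Function.update n u (n u - 1) w)
      = ∑ w ∈ Finset.univ.erase u, G.phiA (ρ.val w) (n w) := by
    refine Finset.sum_congr rfl (fun w hw => ?_)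
    have hne : w ≠ u := Finset.ne_of_mem_erase hw
    rw [Function.update_of_ne hne, show (G.rotAt ρ u).val w = ρ.val w from if_neg hne]
  rw [h1, Function.update_self,
    show (G.rotAt ρ u).val u = G.e (ρ.val u) from if_pos rfl,
    phiA_rot, sub_add_cancel, phiA_one_eq_wA_zero]
  abel

lemma Phi_invRotAt (ρ : G.RotorConfig) (n : ↥G.V0 → ℤ) (u : ↥G.V0) :
    G.Phi (G.invRotAt ρ u) (Function.update n u (n u + 1))
      = G.Phi ρ n + G.wA (ρ.val u) (-1) := by
  rw [G.Phi_eq_add _ _ u, G.Phi_eq_add ρ n u]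
  have h1 : ∑ w ∈ Finset.univ.erase u,
      G.phiA ((G.invRotAt ρ u).val w) (Function.update n u (n u + 1) w)
      = ∑ w ∈ Finset.univ.erase u, G.phiA (ρ.val w) (n w) := by
    refine Finset.sum_congr rfl (fun w hw => ?_)
    have hne : w ≠ u := Finset.ne_of_mem_erase hw
    rw [Function.update_of_ne hne, show (G.invRotAt ρ u).val w = ρ.val w from if_neg hne]
  rw [h1, Function.update_self,
    show (G.invRotAt ρ u).val u = G.e.symm (ρ.val u) from if_pos rfl,
    phiA_rot_symm, add_sub_cancel_right, phiA_symm_one_eq_wA_neg_one]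
  abel

lemma Phi_update_succ (ρ : G.RotorConfig) (n : ↥G.V0 → ℤ) (u : ↥G.V0) :
    G.Phi ρ (Function.update n u (n u + 1)) = G.Phi ρ n + G.wA (ρ.val u) (n u) := by
  rw [G.Phi_eq_add _ _ u, G.Phi_eq_add ρ n u, Function.update_self, phiA_succ]
  have h1 : ∑ w ∈ Finset.univ.erase u, G.phiA (ρ.val w) (Function.update n u (n u + 1) w)
      = ∑ w ∈ Finset.univ.erase u, G.phiA (ρ.val w) (n w) :=
    Finset.sum_congr rfl (fun w hw => by
      rw [Function.update_of_ne (Finset.ne_of_mem_erase hw)])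
  rw [h1]; abel

lemma Phi_update_pred (ρ : G.RotorConfig) (n : ↥G.V0 → ℤ) (u : ↥G.V0) :
    G.Phi ρ (Function.update n u (n u - 1)) = G.Phi ρ n - G.wA (ρ.val u) (n u - 1) := by
  rw [G.Phi_eq_add _ _ u, G.Phi_eq_add ρ n u, Function.update_self, phiA_pred]
  have h1 : ∑ w ∈ Finset.univ.erase u, G.phiA (ρ.val w) (Function.update n u (n u - 1) w)
      = ∑ w ∈ Finset.univ.erase u, G.phiA (ρ.val w) (n w) :=
    Finset.sum_congr rfl (fun w hw => by
      rw [Function.update_of_ne (Finset.ne_of_mem_erase hw)])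
  rw [h1]; abel

/-- `routing⁺_u` realised by `rotAt`. -/
lemma routingStep_rotAt (ρ : G.RotorConfig) (σ : G.V → ℤ) (u : ↥G.V0) :
    G.RoutingStep (ρ, σ) (G.rotAt ρ u, σ + G.wA (ρ.val u) 0) := by
  refine ⟨u, fun w => rfl, fun v => ?_⟩
  show σ v + G.wA (ρ.val u) 0 v = _
  rw [wA_zero]
  show σ v + (G.dd (G.head (ρ.val u)) v - G.dd (G.tail (ρ.val u)) v) = _
  rw [ρ.prop u]
  unfold dd
  ring

/-- `routing⁻_u` realised by `invRotAt`. -/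
lemma routingStep_invRotAt (ρ : G.RotorConfig) (σ : G.V → ℤ) (u : ↥G.V0) :
    G.RoutingStep (G.invRotAt ρ u, σ - G.wA (ρ.val u) (-1)) (ρ, σ) := by
  refine ⟨u, ?_, ?_⟩
  · intro w
    by_cases h : w = u
    · rw [h, if_pos rfl, show (G.invRotAt ρ u).val u = G.e.symm (ρ.val u) from if_pos rfl]
      exact (G.e.apply_symm_apply _).symm
    · rw [if_neg h, show (G.invRotAt ρ u).val w = ρ.val w from if_neg h]
  · intro v
    show σ v = (σ v - G.wA (ρ.val u) (-1) v) - _ + _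
    rw [wA_neg_one]
    show σ v = σ v - (G.dd (G.head (G.e.symm (ρ.val u))) v - G.dd (G.tail (ρ.val u)) v) - _ + _
    rw [ρ.prop u, show (G.invRotAt ρ u).val u = G.e.symm (ρ.val u) from if_pos rfl]
    unfold dd
    ring

end RotorGraph
namespace RotorGraph

variable (G : RotorGraph)

/-- Any equivalence of rotor-particle configurations is captured by a net
rotation vector `n`. -/
lemma rpequiv_keyprop {p q : G.RotorConfig × (G.V → ℤ)} (h : G.RPEquiv p q) :
    ∃ n : ↥G.V0 → ℤ,
      (∀ u, q.1.val u = (G.e ^ (n u)) (p.1.val u)) ∧ q.2 = p.2 + G.Phi p.1 n := by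
  induction h with
  | refl =>
    refine ⟨fun _ => 0, fun u => by rw [zpow_zero]; rfl, ?_⟩
    have : G.Phi p.1 (fun _ => 0) = 0 :=
      Finset.sum_eq_zero fun u _ => G.phiA_zero _
    rw [this, add_zero]
  | tail hab hbc ih =>
    rename_i b c
    obtain ⟨n, hρ, hσ⟩ := ih
    rcases hbc with ⟨u, h1, h2⟩ | ⟨u, h1, h2⟩
    ·
      refine ⟨Function.update n u (n u + 1), fun w => ?_, ?_⟩
      · by_cases hw : w = u
        · rw [hw, Function.update_self, h1 u, if_pos rfl, hρ u, zpow_succ_apply]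
          rfl
        · rw [Function.update_of_ne hw, h1 w, if_neg hw, hρ w]
      · rw [Phi_update_succ]
        funext v
        have h2v := h2 v
        rw [congrFun hσ v, hρ u] at h2v
        simp only [Pi.add_apply] at h2v
        show c.2 v = p.2 v + (G.Phi p.1 n v + G.wA (p.1.val u) (n u) v)
        simp only [wA, dd, Pi.sub_apply]
        rw [show G.tail (p.1.val u) = u.val from p.1.prop u]
        linarith [h2v]
    ·
      have hbu := h1 u
      rw [if_pos rfl] at hbu
      have hcu : c.1.val u = (G.e ^ (n u - 1)) (p.1.val u) := by
        have h3 : G.e.symm (b.1.val u) = c.1.val u := by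
          rw [hbu]; exact G.e.symm_apply_apply (c.1.val u)
        rw [← h3, hρ u, ← zpow_pred_apply]
      refine ⟨Function.update n u (n u - 1), fun w => ?_, ?_⟩
      · by_cases hw : w = u
        · rw [hw, Function.update_self]; exact hcu
        · have h3 := h1 w
          rw [if_neg hw] at h3
          rw [Function.update_of_ne hw, ← h3, hρ w]
      · rw [Phi_update_pred]
        funext v
        have h2v := h2 v
        rw [congrFun hσ v, hcu] at h2v
        simp only [Pi.add_apply] at h2v
        show c.2 v = p.2 v + (G.Phi p.1 n v - G.wA (p.1.val u) (n u - 1) v)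
        simp only [wA, dd, Pi.sub_apply]
        rw [show G.tail (p.1.val u) = u.val from p.1.prop u]
        linarith [h2v]

/-- A net rotation vector `n` can be realised by a sequence of routings. -/
lemma keyprop_rpequiv (N : ℕ) :
    ∀ (ρ : G.RotorConfig) (σ : G.V → ℤ) (n : ↥G.V0 → ℤ) (ρ' : G.RotorConfig)
      (σ' : G.V → ℤ), (∑ u, (n u).natAbs) ≤ N →
      (∀ u, ρ'.val u = (G.e ^ (n u)) (ρ.val u)) → σ' = σ + G.Phi ρ n →
      G.RPEquiv (ρ, σ) (ρ', σ') := by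
  induction N with
  | zero =>
    intro ρ σ n ρ' σ' hN hρ hσ
    have hzero : ∀ u, n u = 0 := by
      intro u
      have h := (Finset.sum_eq_zero_iff.mp (Nat.le_zero.mp hN)) u (Finset.mem_univ u)
      omega
    have h1 : ρ' = ρ := Subtype.ext (funext fun u => by
      rw [hρ u, hzero u, zpow_zero]; rfl)
    have h2 : σ' = σ := by
      rw [hσ, show G.Phi ρ n = 0 from
        Finset.sum_eq_zero fun u _ => by rw [hzero u, phiA_zero], add_zero]
    rw [h1, h2]
    exact Relation.ReflTransGen.refl
  | succ N ih =>
    intro ρ σ n ρ' σ' hN hρ hσ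
    rcases le_or_gt (∑ u, (n u).natAbs) N with hle | hgt
    · exact ih ρ σ n ρ' σ' hle hρ hσ
    · have hne : ∑ u, (n u).natAbs ≠ 0 := by omega
      obtain ⟨u, -, hu⟩ := Finset.exists_ne_zero_of_sum_ne_zero hne
      have hsum1 := Finset.add_sum_erase Finset.univ (fun w => (n w).natAbs)
        (Finset.mem_univ u)
      rcases lt_or_gt_of_ne (show n u ≠ 0 by omega) with hneg | hpos
      · -- n u < 0 : do a reverse routing at u
        refine Relation.ReflTransGen.head (Or.inr (G.routingStep_invRotAt ρ σ u))
          (ih _ _ (Function.update n u (n u + 1)) ρ' σ' ?_ ?_ ?_)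
        · have hsum2 := Finset.add_sum_erase Finset.univ
            (fun w => ((Function.update n u (n u + 1)) w).natAbs) (Finset.mem_univ u)
          have hsum3 : ∑ w ∈ Finset.univ.erase u,
              ((Function.update n u (n u + 1)) w).natAbs
              = ∑ w ∈ Finset.univ.erase u, (n w).natAbs :=
            Finset.sum_congr rfl fun w hw => by
              rw [Function.update_of_ne (Finset.ne_of_mem_erase hw)]
          rw [hsum3, Function.update_self] at hsum2
          omega
        · intro w
          by_cases hw : w = u
          · rw [hw, Function.update_self,
              show (G.invRotAt ρ u).val u = G.e.symm (ρ.val u) from if_pos rfl,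
              ← zpow_pred_apply', add_sub_cancel_right]
            exact hρ u
          · rw [Function.update_of_ne hw,
              show (G.invRotAt ρ u).val w = ρ.val w from if_neg hw]
            exact hρ w
        · rw [Phi_invRotAt, hσ]; abel
      · -- n u > 0 : do a forward routing at u
        refine Relation.ReflTransGen.head (Or.inl (G.routingStep_rotAt ρ σ u))
          (ih _ _ (Function.update n u (n u - 1)) ρ' σ' ?_ ?_ ?_)
        · have hsum2 := Finset.add_sum_erase Finset.univ
            (fun w => ((Function.update n u (n u - 1)) w).natAbs) (Finset.mem_univ u)
          have hsum3 : ∑ w ∈ Finset.univ.erase u,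
              ((Function.update n u (n u - 1)) w).natAbs
              = ∑ w ∈ Finset.univ.erase u, (n w).natAbs :=
            Finset.sum_congr rfl fun w hw => by
              rw [Function.update_of_ne (Finset.ne_of_mem_erase hw)]
          rw [hsum3, Function.update_self] at hsum2
          omega
        · intro w
          by_cases hw : w = u
          · rw [hw, Function.update_self,
              show (G.rotAt ρ u).val u = G.e (ρ.val u) from if_pos rfl,
              ← zpow_succ_apply', sub_add_cancel]
            exact hρ u
          · rw [Function.update_of_ne hw,
              show (G.rotAt ρ u).val w = ρ.val w from if_neg hw]
            exact hρ w
        · rw [Phi_rotAt, hσ]; abel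

end RotorGraph
namespace RotorGraph

variable (G : RotorGraph)

section Closed

variable (ρ : G.RotorConfig) (n : ↥G.V0 → ℤ)

/-- If the total displacement vanishes, positive net rotation propagates along
current rotor arcs. -/
lemma closed_pos (hΦ : G.Phi ρ n = 0) :
    ∀ u : ↥G.V0, 0 < n u → ∃ w : ↥G.V0, w.val = G.head (ρ.val u) ∧ 0 < n w := by
  classical
  set P : Finset G.V := Finset.univ.filter (fun v => ∃ w : ↥G.V0, w.val = v ∧ 0 < n w)
    with hP
  have memP : ∀ v, v ∈ P ↔ ∃ w : ↥G.V0, w.val = v ∧ 0 < n w := by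
    intro v; simp [hP]
  have memP_u : ∀ u : ↥G.V0, u.val ∈ P ↔ 0 < n u := by
    intro u
    rw [memP]
    constructor
    · rintro ⟨w, hw, hw2⟩
      rwa [show w = u from Subtype.ext hw] at hw2
    · intro h; exact ⟨u, rfl, h⟩
  have sumP_wA : ∀ (a : G.A) (k : ℤ), ∑ v ∈ P, G.wA a k v =
      (if G.head ((G.e ^ k) a) ∈ P then (1:ℤ) else 0) -
        (if G.tail a ∈ P then (1:ℤ) else 0) := by
    intro a k
    simp only [wA, dd, Pi.sub_apply]
    rw [Finset.sum_sub_distrib,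
      Finset.sum_ite_eq' P (G.head ((G.e ^ k) a)) (fun _ => (1:ℤ)),
      Finset.sum_ite_eq' P (G.tail a) (fun _ => (1:ℤ))]
  have SP_pos : ∀ (a : G.A) (m : ℤ), 0 ≤ m → ∑ v ∈ P, G.phiA a m v =
      ∑ k ∈ Finset.Ico (0:ℤ) m, ((if G.head ((G.e ^ k) a) ∈ P then (1:ℤ) else 0) -
        (if G.tail a ∈ P then (1:ℤ) else 0)) := by
    intro a m hm
    simp only [phiA, Finset.Ico_eq_empty (show ¬ m < (0:ℤ) by omega), Finset.sum_empty,
      Pi.sub_apply, Finset.sum_apply, Pi.zero_apply, sub_zero]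
    rw [Finset.sum_comm]
    exact Finset.sum_congr rfl fun k _ => sumP_wA a k
  have SP_neg : ∀ (a : G.A) (m : ℤ), m ≤ 0 → ∑ v ∈ P, G.phiA a m v =
      -∑ k ∈ Finset.Ico m (0:ℤ), ((if G.head ((G.e ^ k) a) ∈ P then (1:ℤ) else 0) -
        (if G.tail a ∈ P then (1:ℤ) else 0)) := by
    intro a m hm
    have h1 : ∀ v, G.phiA a m v = -∑ k ∈ Finset.Ico m (0:ℤ), G.wA a k v := by
      intro v
      simp only [phiA, Finset.Ico_eq_empty (show ¬ (0:ℤ) < m by omega), Finset.sum_empty,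
        Pi.sub_apply, Finset.sum_apply, Pi.zero_apply, zero_sub]
    rw [Finset.sum_congr rfl fun v _ => h1 v, Finset.sum_neg_distrib]
    congr 1
    rw [Finset.sum_comm]
    exact Finset.sum_congr rfl fun k _ => sumP_wA a k
  set t : ↥G.V0 → ℤ := fun u => ∑ v ∈ P, G.phiA (ρ.val u) (n u) v with ht
  have tsum : ∑ u, t u = 0 := by
    calc ∑ u, t u = ∑ v ∈ P, ∑ u, G.phiA (ρ.val u) (n u) v := Finset.sum_comm
      _ = ∑ v ∈ P, (G.Phi ρ n) v :=
        Finset.sum_congr rfl fun v _ => (Finset.sum_apply v _ _).symm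
      _ = 0 := by rw [hΦ]; simp
  have tnonpos : ∀ u : ↥G.V0, t u ≤ 0 := by
    intro u
    rcases lt_trichotomy (n u) 0 with h|h|h
    · rw [ht]; dsimp only
      rw [SP_neg _ _ (le_of_lt h)]
      have hc : ¬ (G.tail (ρ.val u) ∈ P) := by rw [ρ.prop u, memP_u]; omega
      simp only [if_neg hc, sub_zero]
      have h2 : (0:ℤ) ≤ ∑ k ∈ Finset.Ico (n u) (0:ℤ),
          (if G.head ((G.e ^ k) (ρ.val u)) ∈ P then (1:ℤ) else 0) :=
        Finset.sum_nonneg fun k _ => by split_ifs <;> norm_num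
      omega
    · rw [ht]; dsimp only
      rw [h]
      simp [phiA_zero]
    · rw [ht]; dsimp only
      rw [SP_pos _ _ (le_of_lt h)]
      have hc : G.tail (ρ.val u) ∈ P := by rw [ρ.prop u, memP_u]; exact h
      simp only [if_pos hc]
      exact Finset.sum_nonpos fun k _ => by split_ifs <;> norm_num
  have tzero : ∀ u, t u = 0 := fun u =>
    (Finset.sum_eq_zero_iff_of_nonpos (fun i _ => tnonpos i)).mp tsum u (Finset.mem_univ u)
  intro u hu
  have h1 := tzero u
  rw [ht] at h1; dsimp only at h1
  rw [SP_pos _ _ (le_of_lt hu)] at h1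
  have hc : G.tail (ρ.val u) ∈ P := by rw [ρ.prop u, memP_u]; exact hu
  simp only [if_pos hc] at h1
  have h2 := (Finset.sum_eq_zero_iff_of_nonpos
    (fun k _ => by split_ifs <;> norm_num)).mp h1 0
    (by simp only [Finset.mem_Ico]; omega)
  have h3 : G.head ((G.e ^ (0:ℤ)) (ρ.val u)) ∈ P := by
    by_contra hcon; rw [if_neg hcon] at h2; omega
  rw [zpow_zero] at h3
  have h4 : G.head (ρ.val u) ∈ P := by simpa using h3
  exact (memP _).mp h4

/-- If the total displacement vanishes, negative net rotation propagates along
the reversed rotor arcs. -/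
lemma closed_neg (hΦ : G.Phi ρ n = 0) :
    ∀ u : ↥G.V0, n u < 0 →
      ∃ w : ↥G.V0, w.val = G.head (G.e.symm (ρ.val u)) ∧ n w < 0 := by
  classical
  set P : Finset G.V := Finset.univ.filter (fun v => ∃ w : ↥G.V0, w.val = v ∧ n w < 0)
    with hP
  have memP : ∀ v, v ∈ P ↔ ∃ w : ↥G.V0, w.val = v ∧ n w < 0 := by
    intro v; simp [hP]
  have memP_u : ∀ u : ↥G.V0, u.val ∈ P ↔ n u < 0 := by
    intro u
    rw [memP]
    constructor
    · rintro ⟨w, hw, hw2⟩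
      rwa [show w = u from Subtype.ext hw] at hw2
    · intro h; exact ⟨u, rfl, h⟩
  have sumP_wA : ∀ (a : G.A) (k : ℤ), ∑ v ∈ P, G.wA a k v =
      (if G.head ((G.e ^ k) a) ∈ P then (1:ℤ) else 0) -
        (if G.tail a ∈ P then (1:ℤ) else 0) := by
    intro a k
    simp only [wA, dd, Pi.sub_apply]
    rw [Finset.sum_sub_distrib,
      Finset.sum_ite_eq' P (G.head ((G.e ^ k) a)) (fun _ => (1:ℤ)),
      Finset.sum_ite_eq' P (G.tail a) (fun _ => (1:ℤ))]
  have SP_pos : ∀ (a : G.A) (m : ℤ), 0 ≤ m → ∑ v ∈ P, G.phiA a m v =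
      ∑ k ∈ Finset.Ico (0:ℤ) m, ((if G.head ((G.e ^ k) a) ∈ P then (1:ℤ) else 0) -
        (if G.tail a ∈ P then (1:ℤ) else 0)) := by
    intro a m hm
    simp only [phiA, Finset.Ico_eq_empty (show ¬ m < (0:ℤ) by omega), Finset.sum_empty,
      Pi.sub_apply, Finset.sum_apply, Pi.zero_apply, sub_zero]
    rw [Finset.sum_comm]
    exact Finset.sum_congr rfl fun k _ => sumP_wA a k
  have SP_neg : ∀ (a : G.A) (m : ℤ), m ≤ 0 → ∑ v ∈ P, G.phiA a m v =
      -∑ k ∈ Finset.Ico m (0:ℤ), ((if G.head ((G.e ^ k) a) ∈ P then (1:ℤ) else 0) -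
        (if G.tail a ∈ P then (1:ℤ) else 0)) := by
    intro a m hm
    have h1 : ∀ v, G.phiA a m v = -∑ k ∈ Finset.Ico m (0:ℤ), G.wA a k v := by
      intro v
      simp only [phiA, Finset.Ico_eq_empty (show ¬ (0:ℤ) < m by omega), Finset.sum_empty,
        Pi.sub_apply, Finset.sum_apply, Pi.zero_apply, zero_sub]
    rw [Finset.sum_congr rfl fun v _ => h1 v, Finset.sum_neg_distrib]
    congr 1
    rw [Finset.sum_comm]
    exact Finset.sum_congr rfl fun k _ => sumP_wA a k
  set t : ↥G.V0 → ℤ := fun u => ∑ v ∈ P, G.phiA (ρ.val u) (n u) v with ht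
  have tsum : ∑ u, t u = 0 := by
    calc ∑ u, t u = ∑ v ∈ P, ∑ u, G.phiA (ρ.val u) (n u) v := Finset.sum_comm
      _ = ∑ v ∈ P, (G.Phi ρ n) v :=
        Finset.sum_congr rfl fun v _ => (Finset.sum_apply v _ _).symm
      _ = 0 := by rw [hΦ]; simp
  have tnonneg : ∀ u : ↥G.V0, 0 ≤ t u := by
    intro u
    rcases lt_trichotomy (n u) 0 with h|h|h
    · rw [ht]; dsimp only
      rw [SP_neg _ _ (le_of_lt h)]
      have hc : G.tail (ρ.val u) ∈ P := by rw [ρ.prop u, memP_u]; exact h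
      simp only [if_pos hc]
      have h2 : ∑ k ∈ Finset.Ico (n u) (0:ℤ),
          ((if G.head ((G.e ^ k) (ρ.val u)) ∈ P then (1:ℤ) else 0) - 1) ≤ 0 :=
        Finset.sum_nonpos fun k _ => by split_ifs <;> norm_num
      omega
    · rw [ht]; dsimp only
      rw [h]
      simp [phiA_zero]
    · rw [ht]; dsimp only
      rw [SP_pos _ _ (le_of_lt h)]
      have hc : ¬ (G.tail (ρ.val u) ∈ P) := by rw [ρ.prop u, memP_u]; omega
      simp only [if_neg hc, sub_zero]
      exact Finset.sum_nonneg fun k _ => by split_ifs <;> norm_num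
  have tzero : ∀ u, t u = 0 := fun u =>
    (Finset.sum_eq_zero_iff_of_nonneg (fun i _ => tnonneg i)).mp tsum u (Finset.mem_univ u)
  intro u hu
  have h1 := tzero u
  rw [ht] at h1; dsimp only at h1
  rw [SP_neg _ _ (le_of_lt hu)] at h1
  have hc : G.tail (ρ.val u) ∈ P := by rw [ρ.prop u, memP_u]; exact hu
  simp only [if_pos hc] at h1
  have h2 := (Finset.sum_eq_zero_iff_of_nonpos
    (fun k _ => by split_ifs <;> norm_num)).mp (by omega : ∑ k ∈ Finset.Ico (n u) (0:ℤ),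
      ((if G.head ((G.e ^ k) (ρ.val u)) ∈ P then (1:ℤ) else 0) - 1) = 0) (-1)
    (by simp only [Finset.mem_Ico]; omega)
  have h3 : G.head ((G.e ^ (-1:ℤ)) (ρ.val u)) ∈ P := by
    by_contra hcon; rw [if_neg hcon] at h2; omega
  rw [zpow_neg_one_apply] at h3
  exact (memP _).mp h3

end Closed

end RotorGraph
namespace RotorGraph

/-- In a finite nonempty type, any self-map admits a genuine injectively
parametrised cycle. -/
lemma exists_cycle {S : Type} [Fintype S] [DecidableEq S] [Nonempty S] (g : S → S) :
    ∃ m : ℕ, 0 < m ∧ ∃ f : ZMod m → S, Function.Injective f ∧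
      ∀ i : ZMod m, f (i + 1) = g (f i) := by
  classical
  obtain ⟨i, j, hij, hiter⟩ :=
    Finite.exists_ne_map_eq_of_infinite (fun k : ℕ => g^[k] (Classical.arbitrary S))
  have main : ∀ i j : ℕ, i < j →
      g^[i] (Classical.arbitrary S) = g^[j] (Classical.arbitrary S) →
      ∃ m : ℕ, 0 < m ∧ ∃ f : ZMod m → S, Function.Injective f ∧
        ∀ i : ZMod m, f (i + 1) = g (f i) := by
    clear hij hiter i j
    intro i j hlt hiter
    set x := Classical.arbitrary S
    set y := g^[i] x with hy
    have hd : g^[j - i] y = y := by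
      rw [hy, ← Function.iterate_add_apply, Nat.sub_add_cancel (le_of_lt hlt), ← hiter]
    have hex : ∃ k, 0 < k ∧ g^[k] y = y := ⟨j - i, by omega, hd⟩
    set m := Nat.find hex with hmdef
    obtain ⟨hmpos, hmy⟩ := Nat.find_spec hex
    haveI : NeZero m := ⟨hmpos.ne'⟩
    have per : ∀ q r : ℕ, g^[m * q + r] y = g^[r] y := by
      intro q
      induction q with
      | zero => intro r; simp
      | succ q ih =>
        intro r
        have h1 : m * (q + 1) + r = (m * q + r) + m := by ring
        rw [h1, Function.iterate_add_apply, hmy, ih r]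
    have permod : ∀ k : ℕ, g^[k % m] y = g^[k] y := by
      intro k
      conv_rhs => rw [show k = m * (k / m) + k % m from (Nat.div_add_mod k m).symm]
      rw [per]
    have key : ∀ A B : ℕ, A ≤ B → B < m → g^[A] y = g^[B] y → A = B := by
      intro A B hAB hB hAB2
      by_contra hne
      have h5 : g^[m - B + A] y = y := by
        rw [Function.iterate_add_apply, hAB2, ← Function.iterate_add_apply,
          Nat.sub_add_cancel (le_of_lt hB), hmy]
      exact Nat.find_min hex (show m - B + A < m by omega) ⟨by omega, h5⟩
    refine ⟨m, hmpos, fun i => g^[i.val] y, ?_, ?_⟩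
    · intro a b hab
      apply ZMod.val_injective
      rcases le_total a.val b.val with h | h
      · exact key _ _ h (ZMod.val_lt b) hab
      · exact (key _ _ h (ZMod.val_lt a) hab.symm).symm
    · intro i
      have h1 : ((i.val + 1 : ℕ) : ZMod m) = i + 1 := by
        push_cast
        rw [ZMod.natCast_val, ZMod.cast_id]
      show g^[(i + 1).val] y = g (g^[i.val] y)
      rw [← h1, ZMod.val_natCast, permod, Function.iterate_succ_apply']
  rcases lt_or_gt_of_ne hij with h | h
  · exact main i j h hiter
  · exact main j i h hiter.symm

end RotorGraph
namespace RotorGraph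

variable (G : RotorGraph)

/-- Telescoping sum of single-rotation displacements around a circuit. -/
lemma sum_phiA_one_circuit (ρc : G.RotorConfig) (C : Set ↥G.V0)
    [DecidablePred (· ∈ C)] (h : G.IsCircuit ρc C) :
    ∑ w ∈ Finset.univ.filter (· ∈ C), G.phiA (ρc.val w) 1 = 0 := by
  classical
  obtain ⟨m, hm, F, hinj, hrange, hhead⟩ := h
  haveI : NeZero m := ⟨hm.ne'⟩
  have himg : Finset.univ.filter (· ∈ C) = Finset.image F Finset.univ := by
    ext w
    simp only [Finset.mem_filter, Finset.mem_univ, true_and, Finset.mem_image, ← hrange,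
      Set.mem_range]
  rw [himg, Finset.sum_image (fun a _ b _ hab => hinj hab)]
  have h1 : ∀ i : ZMod m, G.phiA (ρc.val (F i)) 1 = G.dd ((F (i + 1)).val) - G.dd ((F i).val) :=
    fun i => by rw [phiA_one, hhead i, ρc.prop]
  rw [Finset.sum_congr rfl fun i _ => h1 i, Finset.sum_sub_distrib,
    show ∑ i : ZMod m, G.dd ((F (i + 1)).val) = ∑ i : ZMod m, G.dd ((F i).val) from
      Equiv.sum_comp (Equiv.addRight (1 : ZMod m)) (fun j => G.dd ((F j).val)), sub_self]

/-- Hard direction: a vanishing-displacement net rotation vector can be realised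
by a sequence of cycle pushes. -/
lemma cyclePushSeq_of_keyprop (N : ℕ) :
    ∀ (ρ ρ' : G.RotorConfig) (n : ↥G.V0 → ℤ), (∑ u, (n u).natAbs) ≤ N →
      (∀ u, ρ'.val u = (G.e ^ (n u)) (ρ.val u)) → G.Phi ρ n = 0 →
      G.CyclePushSeq ρ ρ' := by
  classical
  induction N with
  | zero =>
    intro ρ ρ' n hN hρ hΦ
    have hzero : ∀ u, n u = 0 := by
      intro u
      have h := (Finset.sum_eq_zero_iff.mp (Nat.le_zero.mp hN)) u (Finset.mem_univ u)
      omega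
    have h1 : ρ' = ρ := Subtype.ext (funext fun u => by
      rw [hρ u, hzero u, zpow_zero]; rfl)
    rw [h1]
    exact Relation.ReflTransGen.refl
  | succ N ih =>
    intro ρ ρ' n hN hρ hΦ
    rcases le_or_gt (∑ u, (n u).natAbs) N with hle | hgt
    · exact ih ρ ρ' n hle hρ hΦ
    · have hne : ∑ u, (n u).natAbs ≠ 0 := by omega
      obtain ⟨u₀, -, hu₀⟩ := Finset.exists_ne_zero_of_sum_ne_zero hne
      rcases lt_or_gt_of_ne (show n u₀ ≠ 0 by omega) with hneg | hpos
      · -- negative case: find a circuit of `θ⁻¹ρ` inside `{n < 0}`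
        set S := {u : ↥G.V0 // n u < 0}
        haveI : Nonempty S := ⟨⟨u₀, hneg⟩⟩
        have hcl := G.closed_neg ρ n hΦ
        set g : S → S := fun s =>
          ⟨Classical.choose (hcl s.1 s.2), (Classical.choose_spec (hcl s.1 s.2)).2⟩ with hg
        have hg_head : ∀ s : S, ((g s).1 : ↥G.V0).val = G.head (G.e.symm (ρ.val s.1)) :=
          fun s => (Classical.choose_spec (hcl s.1 s.2)).1
        obtain ⟨m, hm, f, hinj, hcyc⟩ := exists_cycle g
        set F : ZMod m → ↥G.V0 := fun i => (f i).1 with hF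
        have Finj : Function.Injective F := fun a b hab => hinj (Subtype.ext hab)
        set C : Set ↥G.V0 := Set.range F with hC
        have hmemC : ∀ w ∈ C, n w < 0 := by
          rintro w ⟨i, rfl⟩
          exact (f i).2
        set ρ₁ : G.RotorConfig := ⟨fun w => if w ∈ C then G.e.symm (ρ.val w) else ρ.val w, by
          intro w; dsimp only; split_ifs with hw
          · rw [tail_e_symm]; exact ρ.prop w
          · exact ρ.prop w⟩ with hρ₁
        have hρ₁C : ∀ w ∈ C, ρ₁.val w = G.e.symm (ρ.val w) := fun w hw => if_pos hw
        have hρ₁nC : ∀ w ∉ C, ρ₁.val w = ρ.val w := fun w hw => if_neg hw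
        have hFg : ∀ i : ZMod m, F (i + 1) = (g (f i)).1 :=
          fun i => congrArg Subtype.val (hcyc i)
        have hcirc : G.IsCircuit ρ₁ C := by
          refine ⟨m, hm, F, Finj, rfl, fun i => ?_⟩
          rw [hρ₁C _ ⟨i, rfl⟩, hFg i]
          exact (hg_head (f i)).symm
        have hpush : G.PosCyclePush ρ₁ ρ := by
          refine ⟨C, hcirc, fun w hw => ?_, fun w hw => (hρ₁nC w hw).symm⟩
          rw [hρ₁C w hw]
          exact (G.e.apply_symm_apply _).symm
        set n₁ : ↥G.V0 → ℤ := fun w => if w ∈ C then n w + 1 else n w with hn₁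
        have hmeas : ∑ u, (n₁ u).natAbs ≤ N := by
          have hlt : ∑ u, (n₁ u).natAbs < ∑ u, (n u).natAbs := by
            refine Finset.sum_lt_sum (fun w _ => ?_) ⟨F 0, Finset.mem_univ _, ?_⟩
            · rw [hn₁]; dsimp only
              split_ifs with hw
              · have := hmemC w hw; omega
              · omega
            · have h0 : F 0 ∈ C := ⟨0, rfl⟩
              rw [hn₁]; dsimp only
              rw [if_pos h0]
              have := hmemC _ h0; omega
          omega
        have hρ' : ∀ u, ρ'.val u = (G.e ^ (n₁ u)) (ρ₁.val u) := by
          intro w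
          by_cases hw : w ∈ C
          · rw [hρ₁C w hw, hn₁]; dsimp only; rw [if_pos hw, ← zpow_pred_apply',
              add_sub_cancel_right]
            exact hρ w
          · rw [hρ₁nC w hw, hn₁]; dsimp only; rw [if_neg hw]
            exact hρ w
        have hΦ' : G.Phi ρ₁ n₁ = 0 := by
          have hsplit : ∀ w, G.phiA (ρ₁.val w) (n₁ w) =
              G.phiA (ρ.val w) (n w) + (if w ∈ C then G.phiA (ρ₁.val w) 1 else 0) := by
            intro w
            by_cases hw : w ∈ C
            · rw [if_pos hw, hρ₁C w hw, hn₁]; dsimp only; rw [if_pos hw]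
              have := G.phiA_rot_symm (ρ.val w) (n w + 1)
              rw [add_sub_cancel_right] at this
              rw [this]
            · rw [if_neg hw, hρ₁nC w hw, hn₁]; dsimp only; rw [if_neg hw, add_zero]
          have : G.Phi ρ₁ n₁ = G.Phi ρ n +
              ∑ w ∈ Finset.univ.filter (· ∈ C), G.phiA (ρ₁.val w) 1 := by
            unfold Phi
            rw [Finset.sum_congr rfl fun w _ => hsplit w, Finset.sum_add_distrib,
              ← Finset.sum_filter]
          rw [this, hΦ, G.sum_phiA_one_circuit ρ₁ C hcirc, zero_add]
        exact Relation.ReflTransGen.head (Or.inr hpush) (ih ρ₁ ρ' n₁ hmeas hρ' hΦ')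
      · -- positive case: find a circuit of `ρ` inside `{0 < n}`
        set S := {u : ↥G.V0 // 0 < n u}
        haveI : Nonempty S := ⟨⟨u₀, hpos⟩⟩
        have hcl := G.closed_pos ρ n hΦ
        set g : S → S := fun s =>
          ⟨Classical.choose (hcl s.1 s.2), (Classical.choose_spec (hcl s.1 s.2)).2⟩ with hg
        have hg_head : ∀ s : S, ((g s).1 : ↥G.V0).val = G.head (ρ.val s.1) :=
          fun s => (Classical.choose_spec (hcl s.1 s.2)).1
        obtain ⟨m, hm, f, hinj, hcyc⟩ := exists_cycle g
        set F : ZMod m → ↥G.V0 := fun i => (f i).1 with hF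
        have Finj : Function.Injective F := fun a b hab => hinj (Subtype.ext hab)
        set C : Set ↥G.V0 := Set.range F with hC
        have hmemC : ∀ w ∈ C, 0 < n w := by
          rintro w ⟨i, rfl⟩
          exact (f i).2
        have hFg : ∀ i : ZMod m, F (i + 1) = (g (f i)).1 :=
          fun i => congrArg Subtype.val (hcyc i)
        have hcirc : G.IsCircuit ρ C := by
          refine ⟨m, hm, F, Finj, rfl, fun i => ?_⟩
          rw [hFg i]
          exact (hg_head (f i)).symm
        set ρ₁ : G.RotorConfig := ⟨fun w => if w ∈ C then G.e (ρ.val w) else ρ.val w, by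
          intro w; dsimp only; split_ifs with hw
          · rw [tail_e]; exact ρ.prop w
          · exact ρ.prop w⟩ with hρ₁
        have hρ₁C : ∀ w ∈ C, ρ₁.val w = G.e (ρ.val w) := fun w hw => if_pos hw
        have hρ₁nC : ∀ w ∉ C, ρ₁.val w = ρ.val w := fun w hw => if_neg hw
        have hpush : G.PosCyclePush ρ ρ₁ :=
          ⟨C, hcirc, fun w hw => hρ₁C w hw, fun w hw => hρ₁nC w hw⟩
        set n₁ : ↥G.V0 → ℤ := fun w => if w ∈ C then n w - 1 else n w with hn₁
        have hmeas : ∑ u, (n₁ u).natAbs ≤ N := by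
          have hlt : ∑ u, (n₁ u).natAbs < ∑ u, (n u).natAbs := by
            refine Finset.sum_lt_sum (fun w _ => ?_) ⟨F 0, Finset.mem_univ _, ?_⟩
            · rw [hn₁]; dsimp only
              split_ifs with hw
              · have := hmemC w hw; omega
              · omega
            · have h0 : F 0 ∈ C := ⟨0, rfl⟩
              rw [hn₁]; dsimp only
              rw [if_pos h0]
              have := hmemC _ h0; omega
          omega
        have hρ' : ∀ u, ρ'.val u = (G.e ^ (n₁ u)) (ρ₁.val u) := by
          intro w
          by_cases hw : w ∈ C
          · rw [hρ₁C w hw, hn₁]; dsimp only; rw [if_pos hw, ← zpow_succ_apply',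
              sub_add_cancel]
            exact hρ w
          · rw [hρ₁nC w hw, hn₁]; dsimp only; rw [if_neg hw]
            exact hρ w
        have hΦ' : G.Phi ρ₁ n₁ = 0 := by
          have hsplit : ∀ w, G.phiA (ρ₁.val w) (n₁ w) =
              G.phiA (ρ.val w) (n w) - (if w ∈ C then G.phiA (ρ.val w) 1 else 0) := by
            intro w
            by_cases hw : w ∈ C
            · rw [if_pos hw, hρ₁C w hw, hn₁]; dsimp only; rw [if_pos hw]
              have := G.phiA_rot (ρ.val w) (n w - 1)
              rw [sub_add_cancel] at this
              rw [this]
            · rw [if_neg hw, hρ₁nC w hw, hn₁]; dsimp only; rw [if_neg hw, sub_zero]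
          have : G.Phi ρ₁ n₁ = G.Phi ρ n -
              ∑ w ∈ Finset.univ.filter (· ∈ C), G.phiA (ρ.val w) 1 := by
            unfold Phi
            rw [Finset.sum_congr rfl fun w _ => hsplit w, Finset.sum_sub_distrib,
              ← Finset.sum_filter]
          rw [this, hΦ, G.sum_phiA_one_circuit ρ C hcirc, zero_sub, neg_zero]
        exact Relation.ReflTransGen.head (Or.inl hpush) (ih ρ₁ ρ' n₁ hmeas hρ' hΦ')

end RotorGraph
namespace RotorGraph

variable (G : RotorGraph)

lemma rpEquiv_symm {p q : G.RotorConfig × (G.V → ℤ)} (h : G.RPEquiv p q) :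
    G.RPEquiv q p := by
  induction h with
  | refl => exact Relation.ReflTransGen.refl
  | tail hab hbc ih => exact Relation.ReflTransGen.head (Or.symm hbc) ih

lemma posCyclePush_rpequiv (ρa ρb : G.RotorConfig) (h : G.PosCyclePush ρa ρb)
    (σ : G.V → ℤ) : G.RPEquiv (ρa, σ) (ρb, σ) := by
  classical
  obtain ⟨C, hcirc, hC, hnC⟩ := h
  set n : ↥G.V0 → ℤ := fun w => if w ∈ C then (1:ℤ) else 0 with hn
  have hΦ : G.Phi ρa n = 0 := by
    unfold Phi
    have h1 : ∀ w : ↥G.V0, G.phiA (ρa.val w) (n w) =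
        (if w ∈ C then G.phiA (ρa.val w) 1 else 0) := by
      intro w
      rw [hn]; dsimp only
      split_ifs with hw
      · rfl
      · exact G.phiA_zero _
    rw [Finset.sum_congr rfl fun w _ => h1 w, ← Finset.sum_filter,
      G.sum_phiA_one_circuit ρa C hcirc]
  refine G.keyprop_rpequiv (∑ u, (n u).natAbs) ρa σ n ρb σ le_rfl ?_ ?_
  · intro w
    rw [hn]; dsimp only
    split_ifs with hw
    · rw [zpow_one]
      exact hC w hw
    · rw [zpow_zero]
      exact hnC w hw
  · rw [hΦ, add_zero]

end RotorGraph
/-- Let `G` be a stopping rotor graph and `ρ, ρ'` rotor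
configurations of `G`. Then `ρ ∼ ρ'` if and only if `ρ'` can be obtained from
`ρ` by a finite sequence of positive and negative cycle pushes. -/
theorem rotorEquiv_iff_cyclePushSeq (G : RotorGraph) (ρ ρ' : G.RotorConfig) :
    G.RotorEquiv ρ ρ' ↔ G.CyclePushSeq ρ ρ' := by
  constructor
  · rintro ⟨σ, h⟩
    obtain ⟨n, hρn, hσn⟩ := G.rpequiv_keyprop h
    have hΦ : G.Phi ρ n = 0 := left_eq_add.mp hσn
    exact G.cyclePushSeq_of_keyprop (∑ u, (n u).natAbs) ρ ρ' n le_rfl hρn hΦ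
  · intro h
    refine ⟨0, ?_⟩
    induction h with
    | refl => exact Relation.ReflTransGen.refl
    | tail hab hbc ih =>
      rename_i b c
      refine Relation.ReflTransGen.trans ih ?_
      rcases hbc with hp | hp
      · exact G.posCyclePush_rpequiv b c hp 0
      · exact G.rpEquiv_symm (G.posCyclePush_rpequiv c b hp 0)
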